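/- Assume f is irreducible, and let g ∈ GL(W) be such that f(w,w,w) = 0 implies f(g(w),g(w),g(w)) = 0 for every w ∈ W (i.e. g maps the affine cone Ŷ into itself). Then there exists a nonzero constant c ∈ ℂ with f(g(u), g(v), g(w)) = c·f(u,v,w) for all u, v, w ∈ W. -/

import Mathlib

open MvPolynomial
noncomputable section
namespace AuxCubic
variable {σ : Type*}
variable {σ : Type*}

lemma fdeg_add (d e : σ →₀ ℕ) : (d + e).degree = d.degree + e.degree := by
  simp only [Finsupp.degree_eq_weight_one, map_add]

lemma fdeg_single (i : σ) (k : ℕ) : (Finsupp.single i k).degree = k := by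
  classical
  simp [Finsupp.degree_eq_weight_one, Finsupp.weight_apply, Finsupp.sum_single_index]

lemma fdeg_succ {d : σ →₀ ℕ} {k : ℕ} (h : d.degree = k + 1) :
    ∃ (i : σ) (e : σ →₀ ℕ), d = Finsupp.single i 1 + e ∧ e.degree = k := by
  classical
  have hd : d ≠ 0 := by
    intro h0; rw [h0] at h; simp [map_zero] at h
  obtain ⟨i, hi⟩ : ∃ i, d i ≠ 0 := by
    by_contra hc; push_neg at hc; exact hd (Finsupp.ext fun a => hc a)
  have hi' : 1 ≤ d i := Nat.one_le_iff_ne_zero.mpr hi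
  have key : d = Finsupp.single i 1 + (d - Finsupp.single i 1) := by
    ext a
    rcases eq_or_ne a i with rfl | ha
    · simp [Finsupp.tsub_apply]; omega
    · simp [Finsupp.single_apply, Ne.symm ha, Finsupp.tsub_apply]
  refine ⟨i, d - Finsupp.single i 1, key, ?_⟩
  have : (Finsupp.single i 1 + (d - Finsupp.single i 1)).degree = k + 1 := by rw [← key, h]
  rw [fdeg_add, fdeg_single] at this
  omega

lemma fdeg_one {d : σ →₀ ℕ} (h : d.degree = 1) : ∃ i, d = Finsupp.single i 1 := by
  obtain ⟨i, e, rfl, he⟩ := fdeg_succ (k := 0) h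
  rw [Finsupp.degree_eq_zero_iff] at he
  exact ⟨i, by rw [he, add_zero]⟩

lemma fdeg_two {d : σ →₀ ℕ} (h : d.degree = 2) :
    ∃ i j, d = Finsupp.single i 1 + Finsupp.single j 1 := by
  obtain ⟨i, e, rfl, he⟩ := fdeg_succ (k := 1) h
  obtain ⟨j, rfl⟩ := fdeg_one he
  exact ⟨i, j, rfl⟩


/-- The algebra map sending `X i ↦ (X i) * t`, tracking homogeneous components. -/
def Φ : MvPolynomial σ ℂ →ₐ[ℂ] Polynomial (MvPolynomial σ ℂ) :=
  aeval (fun i => Polynomial.C (X i) * Polynomial.X)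

lemma Φ_monomial (d : σ →₀ ℕ) (c : ℂ) :
    Φ (monomial d c) = Polynomial.C (monomial d c) * Polynomial.X ^ d.degree := by
  classical
  rw [Φ, aeval_monomial]
  have h1 : (d.prod fun i k => (Polynomial.C (X i : MvPolynomial σ ℂ) * Polynomial.X) ^ k)
      = Polynomial.C (d.prod fun i k => (X i : MvPolynomial σ ℂ) ^ k) *
        Polynomial.X ^ d.degree := by
    rw [Finsupp.prod, Finsupp.prod]
    rw [Finset.prod_congr rfl (fun i _ => mul_pow (Polynomial.C (X i)) Polynomial.X (d i))]
    rw [Finset.prod_mul_distrib, Finset.prod_pow_eq_pow_sum]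
    congr 1
    · rw [map_prod]
      exact Finset.prod_congr rfl (fun i _ =>
        (map_pow (Polynomial.C : MvPolynomial σ ℂ →+* Polynomial (MvPolynomial σ ℂ)) _ _).symm)
  rw [h1, monomial_eq]
  rw [show (algebraMap ℂ (Polynomial (MvPolynomial σ ℂ))) c = Polynomial.C (C c) from rfl]
  rw [← mul_assoc, ← Polynomial.C_mul]

lemma Φ_coeff (A : MvPolynomial σ ℂ) (k : ℕ) :
    (Φ A).coeff k = homogeneousComponent k A := by
  classical
  conv_lhs => rw [← support_sum_monomial_coeff A]
  conv_rhs => rw [← support_sum_monomial_coeff A]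
  rw [map_sum, Polynomial.finset_sum_coeff, map_sum]
  refine Finset.sum_congr rfl fun d _ => ?_
  rw [Φ_monomial, Polynomial.coeff_C_mul, Polynomial.coeff_X_pow]
  rw [homogeneousComponent_apply]
  by_cases hc : coeff d A = 0
  · simp [hc]
  · rw [support_monomial, if_neg hc, Finset.filter_singleton]
    split_ifs with h1 h2 h2 <;>
      simp_all [coeff_monomial, Finsupp.degree, eq_comm]

lemma homog_of_Φ {A : MvPolynomial σ ℂ} {a : ℕ}
    (h : ∀ k, k ≠ a → (Φ A).coeff k = 0) : A.IsHomogeneous a := by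
  have hA : A = homogeneousComponent a A := by
    conv_lhs => rw [← sum_homogeneousComponent A]
    rw [Finset.sum_eq_single a]
    · intro b _ hb
      rw [← Φ_coeff, h b hb]
    · intro ha
      simp only [Finset.mem_range, not_lt] at ha
      exact homogeneousComponent_eq_zero a A (show A.totalDegree < a by omega)
  rw [hA]
  exact homogeneousComponent_isHomogeneous a A

lemma Φ_ne_zero {A : MvPolynomial σ ℂ} (hA : A ≠ 0) : Φ A ≠ 0 := by
  intro h
  apply hA
  conv_lhs => rw [← sum_homogeneousComponent A]
  refine Finset.sum_eq_zero fun k _ => ?_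
  rw [← Φ_coeff, h, Polynomial.coeff_zero]

lemma Φ_of_homog {P : MvPolynomial σ ℂ} {m : ℕ} (hP : P.IsHomogeneous m) :
    Φ P = Polynomial.C P * Polynomial.X ^ m := by
  refine Polynomial.ext fun k => ?_
  rw [Φ_coeff, Polynomial.coeff_C_mul, Polynomial.coeff_X_pow,
    homogeneousComponent_of_mem ((mem_homogeneousSubmodule m P).2 hP)]
  by_cases hk : k = m
  · rw [if_pos hk, if_pos hk, mul_one]
  · rw [if_neg hk, if_neg hk, mul_zero]

lemma factors_homogeneous {P A B : MvPolynomial σ ℂ} {m : ℕ} (hP : P.IsHomogeneous m)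
    (h0 : P ≠ 0) (hAB : P = A * B) :
    ∃ a b, a + b = m ∧ A.IsHomogeneous a ∧ B.IsHomogeneous b := by
  have hA0 : A ≠ 0 := fun h => h0 (by rw [hAB, h, zero_mul])
  have hB0 : B ≠ 0 := fun h => h0 (by rw [hAB, h, mul_zero])
  have hΦA := Φ_ne_zero hA0
  have hΦB := Φ_ne_zero hB0
  have hmul : Φ A * Φ B = Polynomial.C P * Polynomial.X ^ m := by
    rw [← map_mul, ← hAB, Φ_of_homog hP]
  have hd : (Φ A).natDegree + (Φ B).natDegree = m := by
    rw [← Polynomial.natDegree_mul hΦA hΦB, hmul,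
      Polynomial.natDegree_C_mul_X_pow m P h0]
  have ht : (Φ A).natTrailingDegree + (Φ B).natTrailingDegree = m := by
    rw [← Polynomial.natTrailingDegree_mul hΦA hΦB, hmul,
      Polynomial.natTrailingDegree_mul (Polynomial.C_ne_zero.2 h0)
        (pow_ne_zero m Polynomial.X_ne_zero),
      Polynomial.natTrailingDegree_C, Polynomial.natTrailingDegree_X_pow, zero_add]
  have h1 : (Φ A).natTrailingDegree = (Φ A).natDegree := le_antisymm
    (Polynomial.natTrailingDegree_le_natDegree _)
    (by
      have := Polynomial.natTrailingDegree_le_natDegree (Φ B)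
      omega)
  have h2 : (Φ B).natTrailingDegree = (Φ B).natDegree := by
    have := Polynomial.natTrailingDegree_le_natDegree (Φ A)
    have := Polynomial.natTrailingDegree_le_natDegree (Φ B)
    omega
  refine ⟨(Φ A).natDegree, (Φ B).natDegree, hd, ?_, ?_⟩
  · refine homog_of_Φ fun k hk => ?_
    rcases lt_or_gt_of_ne hk with h | h
    · exact Polynomial.coeff_eq_zero_of_lt_natTrailingDegree (by omega)
    · exact Polynomial.coeff_eq_zero_of_natDegree_lt h
  · refine homog_of_Φ fun k hk => ?_
    rcases lt_or_gt_of_ne hk with h | h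
    · exact Polynomial.coeff_eq_zero_of_lt_natTrailingDegree (by omega)
    · exact Polynomial.coeff_eq_zero_of_natDegree_lt h

variable {W : Type*} [AddCommGroup W] [Module ℂ W]

lemma polar_eq_zero (T : W →ₗ[ℂ] W →ₗ[ℂ] W →ₗ[ℂ] ℂ)
    (h1 : ∀ u v w : W, T u v w = T v u w) (h2 : ∀ u v w : W, T u v w = T u w v)
    (h0 : ∀ w : W, T w w w = 0) (u v w : W) : T u v w = 0 := by
  have hA : ∀ u v : W, T u u v = 0 := by
    intro u v
    have e1 := h0 (u + v)
    have e2 := h0 (u - v)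
    simp only [map_add, map_sub, LinearMap.add_apply, LinearMap.sub_apply] at e1 e2
    simp only [h0 u, h0 v, h1 v u u, h2 u v u, h2 v v u, h1 v u v] at e1 e2
    linear_combination e1 / 6 - e2 / 6
  have e3 := hA (u + w) v
  simp only [map_add, LinearMap.add_apply, hA u v, hA w v] at e3
  rw [h2 u v w]
  linear_combination e3 / 2 - (h1 w u v) / 2

lemma eval_cubic {ι : Type*} [Fintype ι] (t : W →ₗ[ℂ] W →ₗ[ℂ] W →ₗ[ℂ] ℂ)
    (hflip : ∀ a c e : W, t a c e = t e c a)
    (b : ι → W) (x : ι → ℂ) :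
    eval x (∑ i : ι, ∑ j : ι, ∑ k : ι, C (t (b i) (b j) (b k)) * (X i * X j * X k))
      = t (∑ i : ι, x i • b i) (∑ j : ι, x j • b j) (∑ k : ι, x k • b k) := by
  simp only [map_sum, eval_mul, eval_C, eval_X, map_smul, LinearMap.sum_apply,
    LinearMap.smul_apply, smul_eq_mul, Finset.mul_sum]
  refine Finset.sum_congr rfl fun i _ => Finset.sum_congr rfl fun j _ =>
    Finset.sum_congr rfl fun k _ => ?_
  rw [hflip (b i) (b j) (b k)]
  ring

lemma cubic_homog {ι : Type*} [Fintype ι] (a : ι → ι → ι → ℂ) :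
    (∑ i : ι, ∑ j : ι, ∑ k : ι, C (a i j k) * (X i * X j * X k)).IsHomogeneous 3 := by
  refine IsHomogeneous.sum _ _ _ fun i _ => IsHomogeneous.sum _ _ _ fun j _ =>
    IsHomogeneous.sum _ _ _ fun k _ => ?_
  have h := (isHomogeneous_C ι (a i j k)).mul
    (((isHomogeneous_X ℂ i).mul (isHomogeneous_X ℂ j)).mul (isHomogeneous_X ℂ k))
  norm_num at h
  exact h

lemma degree_eq_of_mem {A : MvPolynomial σ ℂ} {m : ℕ} (hA : A.IsHomogeneous m)
    {d : σ →₀ ℕ} (hd : d ∈ A.support) : d.degree = m := by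
  by_contra h
  exact (mem_support_iff.1 hd) (hA.coeff_eq_zero h)

variable {W : Type*} [AddCommGroup W] [Module ℂ W] in
/-- symmetrized product of two linear functionals -/
def symPair (φ ψ : W →ₗ[ℂ] ℂ) : W →ₗ[ℂ] W →ₗ[ℂ] ℂ :=
  LinearMap.mk₂ ℂ (fun u v => (φ u * ψ v + ψ u * φ v) / 2)
    (fun m₁ m₂ n => by simp only [map_add]; ring)
    (fun c m n => by simp only [map_smul, smul_eq_mul]; ring)
    (fun m n₁ n₂ => by simp only [map_add]; ring)
    (fun c m n₁ => by simp only [map_smul, smul_eq_mul]; ring)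

variable {W : Type*} [AddCommGroup W] [Module ℂ W]

@[simp] lemma symPair_apply (φ ψ : W →ₗ[ℂ] ℂ) (u v : W) :
    symPair φ ψ u v = (φ u * ψ v + ψ u * φ v) / 2 := rfl

lemma monomial_single_eq (i : σ) (c : ℂ) :
    (monomial (Finsupp.single i 1) c : MvPolynomial σ ℂ) = C c * X i := by
  rw [X, C_apply, monomial_mul, mul_one, zero_add]

lemma eval_monomial_single (x : σ → ℂ) (i : σ) (c : ℂ) :
    eval x (monomial (Finsupp.single i 1) c) = c * x i := by
  rw [monomial_single_eq]; simp

lemma eval_monomial_pair (x : σ → ℂ) (i j : σ) (c : ℂ) :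
    eval x (monomial (Finsupp.single i 1 + Finsupp.single j 1) c) = c * (x i * x j) := by
  have h : (monomial (Finsupp.single i 1 + Finsupp.single j 1) c : MvPolynomial σ ℂ)
      = monomial (Finsupp.single i 1) c * X j := by
    rw [X, monomial_mul, mul_one]
  rw [h, monomial_single_eq]
  simp [mul_assoc]

lemma deg1_linear [Fintype σ] (e : W ≃ₗ[ℂ] (σ → ℂ)) {A : MvPolynomial σ ℂ}
    (hA : A.IsHomogeneous 1) :
    ∃ lam : W →ₗ[ℂ] ℂ, ∀ w : W, lam w = eval (e w) A := by
  classical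
  refine ⟨∑ d ∈ A.support.attach, coeff d.1 A •
      ((LinearMap.proj (fdeg_one (degree_eq_of_mem hA d.2)).choose).comp
        (e : W →ₗ[ℂ] (σ → ℂ))), fun w => ?_⟩
  simp only [LinearMap.sum_apply, LinearMap.smul_apply, LinearMap.comp_apply,
    LinearMap.proj_apply, smul_eq_mul, LinearEquiv.coe_coe]
  conv_rhs => rw [← support_sum_monomial_coeff A, map_sum, ← Finset.sum_attach A.support
    (fun d => eval (e w) (monomial d (coeff d A)))]
  refine Finset.sum_congr rfl fun d _ => ?_
  conv_rhs => rw [(fdeg_one (degree_eq_of_mem hA d.2)).choose_spec]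
  rw [eval_monomial_single]
  congr 1
  exact congrArg (fun t => coeff t A) (fdeg_one (degree_eq_of_mem hA d.2)).choose_spec

lemma deg2_bilinear [Fintype σ] (e : W ≃ₗ[ℂ] (σ → ℂ)) {B : MvPolynomial σ ℂ}
    (hB : B.IsHomogeneous 2) :
    ∃ Bil : W →ₗ[ℂ] W →ₗ[ℂ] ℂ, (∀ u v : W, Bil u v = Bil v u) ∧
      ∀ w : W, Bil w w = eval (e w) B := by
  classical
  set ch := fun (d : {x // x ∈ B.support}) => fdeg_two (degree_eq_of_mem hB d.2) with hch
  refine ⟨∑ d ∈ B.support.attach, coeff d.1 B •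
      symPair (LinearMap.proj ((ch d).choose) ∘ₗ (e : W →ₗ[ℂ] (σ → ℂ)))
              (LinearMap.proj ((ch d).choose_spec).choose ∘ₗ (e : W →ₗ[ℂ] (σ → ℂ))),
    fun u v => ?_, fun w => ?_⟩
  · simp only [LinearMap.sum_apply, LinearMap.smul_apply, symPair_apply,
      LinearMap.comp_apply, LinearMap.proj_apply, smul_eq_mul, LinearEquiv.coe_coe]
    refine Finset.sum_congr rfl fun d _ => ?_
    ring
  · simp only [LinearMap.sum_apply, LinearMap.smul_apply, symPair_apply,
      LinearMap.comp_apply, LinearMap.proj_apply, smul_eq_mul, LinearEquiv.coe_coe]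
    conv_rhs => rw [← support_sum_monomial_coeff B, map_sum, ← Finset.sum_attach B.support
      (fun d => eval (e w) (monomial d (coeff d B)))]
    refine Finset.sum_congr rfl fun d _ => ?_
    conv_rhs => rw [((ch d).choose_spec).choose_spec]
    rw [eval_monomial_pair]
    rw [congrArg (fun t => coeff t B) ((ch d).choose_spec).choose_spec]
    ring

lemma homog_zero_unit {A : MvPolynomial σ ℂ} (hA : A.IsHomogeneous 0) (h0 : A ≠ 0) :
    IsUnit A := by
  classical
  have hAC : A = C (coeff 0 A) := by
    ext d
    by_cases hd : d = 0
    · subst hd; simp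
    · rw [hA.coeff_eq_zero (by simpa [Finsupp.degree_eq_zero_iff] using hd), coeff_C,
        if_neg (fun h => hd h.symm)]
  have hc : coeff 0 A ≠ 0 := fun hcc => h0 (by rw [hAC, hcc, map_zero])
  rw [hAC]
  exact (isUnit_iff_ne_zero.mpr hc).map (C : ℂ →+* MvPolynomial σ ℂ)


end AuxCubic

open AuxCubic in
/-- If `f` is irreducible and `g ∈ GL(W)` maps the affine cone `Ŷ`
into itself, then `g` scales `f` by some nonzero constant `c`. -/
theorem linear_automorphism_of_cubic_scales_form
    {W : Type*} [AddCommGroup W] [Module ℂ W] [FiniteDimensional ℂ W]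
    (f : W →ₗ[ℂ] W →ₗ[ℂ] W →ₗ[ℂ] ℂ)
    (hsym1 : ∀ u v w : W, f u v w = f v u w)
    (hsym2 : ∀ u v w : W, f u v w = f u w v)
    (hf : f ≠ 0)
    (hirr : ¬ ∃ (lam : W →ₗ[ℂ] ℂ) (B : W →ₗ[ℂ] W →ₗ[ℂ] ℂ),
      lam ≠ 0 ∧ B ≠ 0 ∧ (∀ u v : W, B u v = B v u) ∧ ∀ w : W, f w w w = lam w * B w w)
    (g : W ≃ₗ[ℂ] W)
    (hg : ∀ w : W, f w w w = 0 → f (g w) (g w) (g w) = 0) :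
    ∃ c : ℂ, c ≠ 0 ∧ ∀ u v w : W, f (g u) (g v) (g w) = c * f u v w := by
  classical
  set n := Module.finrank ℂ W with hn
  let b : Module.Basis (Fin n) ℂ W := Module.finBasis ℂ W
  let e : W ≃ₗ[ℂ] (Fin n → ℂ) := b.equivFun
  have hsum : ∀ w : W, ∑ i, e w i • b i = w := fun w => b.sum_equivFun w
  -- the trilinear form transported by g
  let Tg : W →ₗ[ℂ] W →ₗ[ℂ] W →ₗ[ℂ] ℂ := LinearMap.mk₂ ℂ
    (fun u v => (f (g u) (g v)).comp (g : W →ₗ[ℂ] W))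
    (fun m₁ m₂ nn => by
      ext w; simp [map_add, LinearMap.add_apply])
    (fun c m nn => by
      ext w; simp)
    (fun m n₁ n₂ => by
      ext w; simp [map_add, LinearMap.add_apply])
    (fun c m nn => by
      ext w; simp)
  have hTg : ∀ u v w : W, Tg u v w = f (g u) (g v) (g w) := fun u v w => rfl
  have hflip : ∀ a c d : W, f a c d = f d c a := fun a c d => by
    rw [hsym2, hsym1, hsym2]
  have hflipT : ∀ a c d : W, Tg a c d = Tg d c a := fun a c d => by
    rw [hTg, hTg, hflip]
  -- the cubic polynomials
  let P : MvPolynomial (Fin n) ℂ :=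
    ∑ i, ∑ j, ∑ k, MvPolynomial.C (f (b i) (b j) (b k)) *
      (MvPolynomial.X i * MvPolynomial.X j * MvPolynomial.X k)
  let Q : MvPolynomial (Fin n) ℂ :=
    ∑ i, ∑ j, ∑ k, MvPolynomial.C (Tg (b i) (b j) (b k)) *
      (MvPolynomial.X i * MvPolynomial.X j * MvPolynomial.X k)
  have hevalP : ∀ w : W, MvPolynomial.eval (e w) P = f w w w := fun w => by
    rw [show P = _ from rfl, eval_cubic f hflip b (e w), hsum w]
  have hevalQ : ∀ w : W, MvPolynomial.eval (e w) Q = f (g w) (g w) (g w) := fun w => by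
    rw [show Q = _ from rfl, eval_cubic Tg hflipT b (e w), hsum w, hTg]
  have hP3 : P.IsHomogeneous 3 := cubic_homog _
  have hQ3 : Q.IsHomogeneous 3 := cubic_homog _
  have hfne : ¬ ∀ w : W, f w w w = 0 := by
    intro h
    apply hf
    ext u v w
    exact polar_eq_zero f hsym1 hsym2 h u v w
  have hP0 : P ≠ 0 := by
    intro h
    exact hfne fun w => by rw [← hevalP w, h, map_zero]
  -- irreducibility of P
  have hPnu : ¬ IsUnit P := by
    intro h
    obtain ⟨Pi, hPi⟩ := isUnit_iff_exists_inv.mp h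
    have h0 := congrArg MvPolynomial.constantCoeff hPi
    rw [map_mul, map_one,
      show MvPolynomial.constantCoeff P = MvPolynomial.coeff 0 P from rfl,
      hP3.coeff_eq_zero (by simp), zero_mul] at h0
    exact zero_ne_one h0
  have hPirred : Irreducible P := by
    rw [irreducible_iff]
    refine ⟨hPnu, fun A B hab => ?_⟩
    by_contra hcon
    push_neg at hcon
    obtain ⟨hAnu, hBnu⟩ := hcon
    obtain ⟨da, db, hdadb, hA, hB⟩ := factors_homogeneous hP3 hP0 hab
    have hA0 : A ≠ 0 := fun h => hP0 (by rw [hab, h, zero_mul])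
    have hB0 : B ≠ 0 := fun h => hP0 (by rw [hab, h, mul_zero])
    have hda : da ≠ 0 := by
      rintro rfl
      exact hAnu (homog_zero_unit hA hA0)
    have hdb : db ≠ 0 := by
      rintro rfl
      exact hBnu (homog_zero_unit hB hB0)
    have hcases : (da = 1 ∧ db = 2) ∨ (da = 2 ∧ db = 1) := by omega
    rcases hcases with ⟨rfl, rfl⟩ | ⟨rfl, rfl⟩
    · obtain ⟨lam, hlam⟩ := deg1_linear e hA
      obtain ⟨Bil, hBilsym, hBil⟩ := deg2_bilinear e hB
      refine hirr ⟨lam, Bil, ?_, ?_, hBilsym, fun w => ?_⟩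
      · intro h
        apply hA0
        apply MvPolynomial.funext fun x => ?_
        rw [map_zero, ← e.apply_symm_apply x, ← hlam, h, LinearMap.zero_apply]
      · intro h
        apply hB0
        apply MvPolynomial.funext fun x => ?_
        rw [map_zero, ← e.apply_symm_apply x, ← hBil, h, LinearMap.zero_apply,
          LinearMap.zero_apply]
      · rw [← hevalP w, hab, map_mul, hlam, hBil]
    · obtain ⟨lam, hlam⟩ := deg1_linear e hB
      obtain ⟨Bil, hBilsym, hBil⟩ := deg2_bilinear e hA
      refine hirr ⟨lam, Bil, ?_, ?_, hBilsym, fun w => ?_⟩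
      · intro h
        apply hB0
        apply MvPolynomial.funext fun x => ?_
        rw [map_zero, ← e.apply_symm_apply x, ← hlam, h, LinearMap.zero_apply]
      · intro h
        apply hA0
        apply MvPolynomial.funext fun x => ?_
        rw [map_zero, ← e.apply_symm_apply x, ← hBil, h, LinearMap.zero_apply,
          LinearMap.zero_apply]
      · rw [← hevalP w, hab, map_mul, hlam, hBil, mul_comm]
  -- Nullstellensatz
  have hprime : Prime P := UniqueFactorizationMonoid.irreducible_iff_prime.mp hPirred
  have hspan : (Ideal.span ({P} : Set (MvPolynomial (Fin n) ℂ))).IsPrime :=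
    (Ideal.span_singleton_prime hP0).mpr hprime
  have hQmem : Q ∈ Ideal.span ({P} : Set (MvPolynomial (Fin n) ℂ)) := by
    have hv : Q ∈ MvPolynomial.vanishingIdeal ℂ
        (MvPolynomial.zeroLocus ℂ (Ideal.span ({P} : Set (MvPolynomial (Fin n) ℂ)))) := by
      intro x hx
      show MvPolynomial.eval x Q = 0
      have hxP : MvPolynomial.eval x P = 0 := hx P (Ideal.subset_span rfl)
      have hw : e (e.symm x) = x := e.apply_symm_apply x
      rw [← hw] at hxP ⊢
      rw [hevalP] at hxP
      rw [hevalQ]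
      exact hg _ hxP
    rw [MvPolynomial.vanishingIdeal_zeroLocus_eq_radical, hspan.radical] at hv
    exact hv
  obtain ⟨R, hR⟩ := Ideal.mem_span_singleton'.mp hQmem
  set c : ℂ := MvPolynomial.coeff 0 R with hc
  have hQc : Q = MvPolynomial.C c * P := by
    ext d
    by_cases hd3 : d.degree = 3
    · rw [← hR, MvPolynomial.coeff_mul, MvPolynomial.coeff_C_mul]
      refine Finset.sum_eq_single_of_mem (0, d) (Finset.HasAntidiagonal.mem_antidiagonal.mpr (zero_add d)) ?_
      rintro ⟨x, y⟩ hxy hne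
      rw [Finset.HasAntidiagonal.mem_antidiagonal] at hxy
      show MvPolynomial.coeff x R * MvPolynomial.coeff y P = 0
      by_cases hy3 : y.degree = 3
      · have hx0 : x.degree = 0 := by
          have hadd := fdeg_add x y
          rw [hxy, hd3, hy3] at hadd
          omega
        rw [Finsupp.degree_eq_zero_iff] at hx0
        subst hx0
        rw [zero_add] at hxy
        exact absurd (by simp only [Prod.mk.injEq]; exact ⟨trivial, hxy⟩) hne
      · rw [hP3.coeff_eq_zero hy3, mul_zero]
    · rw [hQ3.coeff_eq_zero hd3, MvPolynomial.coeff_C_mul, hP3.coeff_eq_zero hd3, mul_zero]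
  have hscale : ∀ w : W, f (g w) (g w) (g w) = c * f w w w := fun w => by
    rw [← hevalQ w, hQc, map_mul, MvPolynomial.eval_C, hevalP]
  have hc0 : c ≠ 0 := by
    intro hcz
    apply hfne
    intro w
    have h5 := hscale (g.symm w)
    rw [g.apply_symm_apply, hcz, zero_mul] at h5
    exact h5
  refine ⟨c, hc0, fun u v w => ?_⟩
  have hT := polar_eq_zero (Tg - c • f)
    (fun u v w => by
      simp only [LinearMap.sub_apply, LinearMap.smul_apply, smul_eq_mul]
      rw [hTg, hTg, hsym1 (g u) (g v) (g w), hsym1 u v w])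
    (fun u v w => by
      simp only [LinearMap.sub_apply, LinearMap.smul_apply, smul_eq_mul]
      rw [hTg, hTg, hsym2 (g u) (g v) (g w), hsym2 u v w])
    (fun w => by
      simp only [LinearMap.sub_apply, LinearMap.smul_apply, smul_eq_mul]
      rw [hTg, hscale w, sub_self])
    u v w
  simp only [LinearMap.sub_apply, LinearMap.smul_apply, smul_eq_mul, hTg] at hT
  linear_combination hT
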